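/- Let μ > 0 and let T_v, T_{v'} ⊆ ℝⁿ be n-simplexes with vertex matrices v = (v₀,…,v_n) and v' = (v₀',…,v_n') satisfying |v_i − v_j| < μ for all i, j, and with δ := max_i |v_i − v_i'| ≤ μ. Then the Lebesgue measure of the symmetric difference satisfies |T_{v'} △ T_v| ≤ 3ⁿ(n+1)μ^{n−1}δ. In particular, the map v ↦ χ_{T_v} ∈ L¹(ℝⁿ) is locally Lipschitz with constant 3ⁿ(n+1)μ^{n−1} with respect to the norm ‖v‖ = max_i |v_i|. -/

import Mathlib

open MeasureTheory Set Finset AffineMap RealInnerProductSpace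


lemma crossing {n : ℕ} {E : Type*} [NormedAddCommGroup E] [NormedSpace ℝ E]
    (b : AffineBasis (Fin (n+1)) ℝ E) (p q : E)
    (hp : ∀ i, 0 ≤ b.coord i p) (hq : ¬ ∀ i, 0 ≤ b.coord i q) :
    ∃ (i : Fin (n+1)) (z : E), (∀ j, 0 ≤ b.coord j z) ∧ b.coord i z = 0 ∧
      dist p z ≤ dist p q ∧ dist q z ≤ dist p q := by
  push_neg at hq
  set J : Finset (Fin (n+1)) := Finset.univ.filter (fun i => b.coord i q < 0) with hJ
  have hJne : J.Nonempty := by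
    obtain ⟨i, hi⟩ := hq
    exact ⟨i, by simp [hJ, hi]⟩
  set g : Fin (n+1) → ℝ := fun i => b.coord i p / (b.coord i p - b.coord i q) with hg
  have hd : ∀ i ∈ J, 0 < b.coord i p - b.coord i q := by
    intro i hi
    have : b.coord i q < 0 := by simpa [hJ] using hi
    have := hp i; linarith
  have hg01 : ∀ i ∈ J, g i ∈ Set.Icc (0:ℝ) 1 := by
    intro i hi
    have hqi : b.coord i q < 0 := by simpa [hJ] using hi
    constructor
    · exact div_nonneg (hp i) (hd i hi).le
    · rw [div_le_one (hd i hi)]; linarith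
  set t : ℝ := J.inf' hJne g with htdef
  obtain ⟨i, hiJ, hit⟩ := J.exists_mem_eq_inf' hJne g
  have ht0 : 0 ≤ t := Finset.le_inf' hJne g (fun j hj => (hg01 j hj).1)
  have ht1 : t ≤ 1 := by rw [htdef, hit]; exact (hg01 i hiJ).2
  set z : E := AffineMap.lineMap p q t with hzdef
  have hcz : ∀ j, b.coord j z = b.coord j p + t * (b.coord j q - b.coord j p) := by
    intro j
    rw [hzdef, AffineMap.apply_lineMap]
    simp [AffineMap.lineMap_apply_module]
    ring
  have hnonneg : ∀ j, 0 ≤ b.coord j z := by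
    intro j
    rw [hcz j]
    by_cases hjq : b.coord j q < 0
    · have hjJ : j ∈ J := by simp [hJ, hjq]
      have htle : t ≤ g j := Finset.inf'_le g hjJ
      have hdj := hd j hjJ
      have : g j * (b.coord j p - b.coord j q) = b.coord j p :=
        div_mul_cancel₀ _ hdj.ne'
      nlinarith
    · push_neg at hjq
      nlinarith [hp j]
  have hzi : b.coord i z = 0 := by
    rw [hcz i]
    have hdi := hd i hiJ
    have ht : t = b.coord i p / (b.coord i p - b.coord i q) := by rw [htdef, hit]
    rw [ht]
    field_simp [hdi.ne']
    ring
  refine ⟨i, z, hnonneg, hzi, ?_, ?_⟩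
  · rw [hzdef, dist_comm, dist_lineMap_left]
    calc ‖t‖ * dist p q ≤ 1 * dist p q := by
          apply mul_le_mul_of_nonneg_right _ dist_nonneg
          rw [Real.norm_eq_abs, abs_of_nonneg ht0]; exact ht1
      _ = dist p q := one_mul _
  · rw [hzdef, dist_comm, dist_lineMap_right]
    calc ‖1 - t‖ * dist p q ≤ 1 * dist p q := by
          apply mul_le_mul_of_nonneg_right _ dist_nonneg
          rw [Real.norm_eq_abs, abs_of_nonneg (by linarith)]; linarith
      _ = dist p q := one_mul _

lemma mem_facet {n : ℕ} {E : Type*} [NormedAddCommGroup E] [NormedSpace ℝ E]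
    (b : AffineBasis (Fin (n+1)) ℝ E) (z : E)
    (hz : ∀ j, 0 ≤ b.coord j z) (i : Fin (n+1)) (hzi : b.coord i z = 0) :
    z ∈ convexHull ℝ (Set.range (⇑b ∘ i.succAbove)) := by
  set c : Fin (n+1) → ℝ := fun j => b.coord j z with hc
  have hsum : ∑ j, c j = 1 := b.sum_coord_apply_eq_one z
  have hsum' : ∑ k, c (i.succAbove k) = 1 := by
    rw [Fin.sum_univ_succAbove c i] at hsum
    simpa [hc, hzi] using hsum
  have hrep : z = Finset.univ.affineCombination ℝ (⇑b ∘ i.succAbove) (c ∘ i.succAbove) := by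
    have h1 : z = Finset.univ.affineCombination ℝ ⇑b c := (b.affineCombination_coord_eq_self z).symm
    rw [Finset.univ.affineCombination_eq_linear_combination _ _ hsum] at h1
    rw [Finset.univ.affineCombination_eq_linear_combination (⇑b ∘ i.succAbove) (c ∘ i.succAbove) hsum']
    rw [h1, Fin.sum_univ_succAbove (fun j => c j • b j) i]
    simp [hc, hzi]
  rw [hrep]
  exact affineCombination_mem_convexHull (fun k _ => hz _) hsum'

lemma slab_vol (n : ℕ) (hn : 0 < n) (μ δ : ℝ) (hδ0 : 0 ≤ δ)
    (w : Fin n → EuclideanSpace ℝ (Fin n)) (hw : ∀ j k, ‖w j - w k‖ ≤ μ) :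
    volume {x : EuclideanSpace ℝ (Fin n) | ∃ z ∈ convexHull ℝ (Set.range w), dist x z ≤ δ}
      ≤ ENNReal.ofReal ((μ + 2*δ)^(n-1) * (2*δ)) := by
  haveI : NeZero n := ⟨hn.ne'⟩
  set j₀ : Fin n := ⟨0, hn⟩ with hj₀
  -- vectorSpan has finrank ≤ n - 1
  have hcard : Fintype.card (Fin n) = (n - 1) + 1 := by
    simp; omega
  have hfr : Module.finrank ℝ (vectorSpan ℝ (Set.range w)) ≤ n - 1 :=
    finrank_vectorSpan_range_le ℝ w hcard
  have hne_top : vectorSpan ℝ (Set.range w) ≠ ⊤ := by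
    intro h
    rw [h] at hfr
    have : Module.finrank ℝ (⊤ : Submodule ℝ (EuclideanSpace ℝ (Fin n))) = n := by
      rw [finrank_top]; exact finrank_euclideanSpace_fin
    omega
  -- get a unit normal vector
  obtain ⟨u0, hu0mem, hu0ne⟩ : ∃ u0 ∈ (vectorSpan ℝ (Set.range w))ᗮ, u0 ≠ 0 := by
    by_contra h
    push_neg at h
    have : (vectorSpan ℝ (Set.range w))ᗮ = ⊥ := by
      rw [Submodule.eq_bot_iff]
      exact fun x hx => h x hx
    exact hne_top (Submodule.orthogonal_eq_bot_iff.mp this)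
  set u : EuclideanSpace ℝ (Fin n) := ‖u0‖⁻¹ • u0 with hu
  have hu_norm : ‖u‖ = 1 := by
    rw [hu, norm_smul, norm_inv, norm_norm, inv_mul_cancel₀ (norm_ne_zero_iff.mpr hu0ne)]
  have hu_mem : u ∈ (vectorSpan ℝ (Set.range w))ᗮ :=
    Submodule.smul_mem _ _ hu0mem
  -- orthonormal basis extending u
  have hcard' : Module.finrank ℝ (EuclideanSpace ℝ (Fin n)) = Fintype.card (Fin n) := by
    simp [finrank_euclideanSpace_fin]
  have horth : Orthonormal ℝ (({j₀} : Set (Fin n)).restrict (fun _ => u)) := by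
    constructor
    · intro i; exact hu_norm
    · intro i j hij
      exact absurd (Subsingleton.elim i j) hij
  obtain ⟨b, hb⟩ := horth.exists_orthonormalBasis_extension_of_card_eq hcard'
  have hbj₀ : b j₀ = u := hb j₀ rfl
  have hμ0 : 0 ≤ μ := le_trans (norm_nonneg (w j₀ - w j₀)) (by simpa using hw j₀ j₀)
  set c : ℝ := ⟪u, w j₀⟫ with hc
  have hne : (Finset.univ : Finset (Fin n)).Nonempty := Finset.univ_nonempty
  set m : Fin n → ℝ := fun k => Finset.univ.inf' hne (fun j => ⟪b k, w j⟫) with hm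
  set I : Fin n → Set ℝ := fun k =>
    if k = j₀ then Set.Icc (c - δ) (c + δ) else Set.Icc (m k - δ) (m k + μ + δ) with hI
  have hImeas : ∀ k, MeasurableSet (I k) := by
    intro k; by_cases h : k = j₀ <;> simp [hI, h, measurableSet_Icc]
  have hincl : {x : EuclideanSpace ℝ (Fin n) | ∃ z ∈ convexHull ℝ (Set.range w), dist x z ≤ δ}
      ⊆ ⇑b.repr ⁻¹' (WithLp.ofLp ⁻¹' Set.pi Set.univ I) := by
    rintro x ⟨z, hzhull, hdist⟩ k -
    have hrepr : b.repr x k = ⟪b k, x⟫ := b.repr_apply_apply x k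
    have hdiff : |⟪b k, x⟫ - ⟪b k, z⟫| ≤ δ := by
      rw [← inner_sub_right]
      calc |⟪b k, x - z⟫| ≤ ‖b k‖ * ‖x - z‖ := abs_real_inner_le_norm _ _
        _ = dist x z := by rw [b.orthonormal.1 k, one_mul, dist_eq_norm]
        _ ≤ δ := hdist
    have habs := abs_le.mp hdiff
    show b.repr x k ∈ I k
    by_cases h : k = j₀
    · subst h
      have hz_span : z - w j₀ ∈ vectorSpan ℝ (Set.range w) := by
        have h1 : z ∈ affineSpan ℝ (Set.range w) :=
          convexHull_subset_affineSpan _ hzhull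
        have h2 : w j₀ ∈ affineSpan ℝ (Set.range w) :=
          subset_affineSpan ℝ _ (Set.mem_range_self j₀)
        have := AffineSubspace.vsub_mem_direction h1 h2
        rwa [direction_affineSpan] at this
      have hzc : ⟪b j₀, z⟫ = c := by
        rw [hbj₀]
        have h0 : ⟪u, z - w j₀⟫ = 0 :=
          (Submodule.mem_orthogonal' _ u).mp hu_mem _ hz_span
        rw [inner_sub_right] at h0
        rw [hc]; linarith
      rw [hzc] at habs
      simp only [hI, if_pos rfl, hrepr]
      exact ⟨by linarith [habs.1], by linarith [habs.2]⟩
    · have hsub : convexHull ℝ (Set.range w)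
          ⊆ {y : EuclideanSpace ℝ (Fin n) | ⟪b k, y⟫ ∈ Set.Icc (m k) (m k + μ)} := by
        apply convexHull_min
        · rintro - ⟨j, rfl⟩
          constructor
          · exact Finset.inf'_le _ (Finset.mem_univ j)
          · obtain ⟨j', -, hj'⟩ := Finset.exists_mem_eq_inf' hne (fun j => ⟪b k, w j⟫)
            have h2 : ⟪b k, w j - w j'⟫ ≤ μ := by
              calc ⟪b k, w j - w j'⟫ ≤ ‖b k‖ * ‖w j - w j'‖ := real_inner_le_norm _ _
                _ ≤ μ := by rw [b.orthonormal.1 k, one_mul]; exact hw j j'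
            rw [inner_sub_right] at h2
            rw [hm]
            rw [← hj'] at h2
            simp only []
            linarith
        · exact (convex_Icc (m k) (m k + μ)).linear_preimage
            ((innerSL ℝ (b k)).toLinearMap)
      have hzb := hsub hzhull
      simp only [Set.mem_setOf_eq, Set.mem_Icc] at hzb
      simp only [hI, if_neg h, hrepr, Set.mem_Icc]
      exact ⟨by linarith [habs.1, hzb.1], by linarith [habs.2, hzb.2]⟩
  have hmeas_pi : MeasurableSet (Set.pi Set.univ I) :=
    MeasurableSet.univ_pi hImeas
  calc volume {x : EuclideanSpace ℝ (Fin n) | ∃ z ∈ convexHull ℝ (Set.range w), dist x z ≤ δ}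
      ≤ volume (⇑b.repr ⁻¹' (WithLp.ofLp ⁻¹' Set.pi Set.univ I)) := measure_mono hincl
    _ = (@volume (EuclideanSpace ℝ (Fin n)) measureSpaceOfInnerProductSpace) (WithLp.ofLp ⁻¹' Set.pi Set.univ I) :=
        b.measurePreserving_repr.measure_preimage
          (hmeas_pi.preimage (MeasurableEquiv.toLp 2 (Fin n → ℝ)).symm.measurable).nullMeasurableSet
    _ = (@volume (Fin n → ℝ) MeasureSpace.pi) (Set.pi Set.univ I) := by
        rw [← (EuclideanSpace.volume_preserving_symm_measurableEquiv_toLp (Fin n)).measure_preimage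
          hmeas_pi.nullMeasurableSet]
        rfl
    _ = ∏ k, volume (I k) := volume_pi_pi I
    _ = ENNReal.ofReal ((μ + 2*δ)^(n-1) * (2*δ)) := by
        have hvol : ∀ k, volume (I k) =
            if k = j₀ then ENNReal.ofReal (2*δ) else ENNReal.ofReal (μ + 2*δ) := by
          intro k
          by_cases h : k = j₀
          · simp only [hI, if_pos h, Real.volume_Icc]
            congr 1; ring
          · simp only [hI, if_neg h, Real.volume_Icc]
            congr 1; ring
        simp_rw [hvol]
        rw [← Finset.mul_prod_erase Finset.univ _ (Finset.mem_univ j₀)]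
        rw [if_pos rfl]
        have hprod : ∏ k ∈ Finset.univ.erase j₀,
            (if k = j₀ then ENNReal.ofReal (2*δ) else ENNReal.ofReal (μ + 2*δ))
            = ENNReal.ofReal (μ + 2*δ) ^ (n-1) := by
          rw [Finset.prod_congr rfl (fun k hk => if_neg (Finset.mem_erase.mp hk).1)]
          rw [Finset.prod_const, Finset.card_erase_of_mem (Finset.mem_univ j₀)]
          simp
        rw [hprod, ← ENNReal.ofReal_pow (by linarith), ← ENNReal.ofReal_mul (by linarith)]
        congr 1; ring

lemma mem_of_ball_subset {n : ℕ} (δ : ℝ) (hδ0 : 0 ≤ δ)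
    (v v' : Fin (n+1) → EuclideanSpace ℝ (Fin n))
    (hδ : ∀ i, ‖v i - v' i‖ ≤ δ)
    (x : EuclideanSpace ℝ (Fin n))
    (hball : ∀ y, dist y x ≤ δ → y ∈ convexHull ℝ (Set.range v)) :
    x ∈ convexHull ℝ (Set.range v') := by
  by_contra hx
  have hconv : Convex ℝ (convexHull ℝ (Set.range v')) := convex_convexHull _ _
  have hcl : IsClosed (convexHull ℝ (Set.range v')) :=
    ((Set.finite_range v').isCompact_convexHull ℝ).isClosed
  obtain ⟨f, s, hfs, hsx⟩ := geometric_hahn_banach_closed_point hconv hcl hx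
  set a : EuclideanSpace ℝ (Fin n) := (InnerProductSpace.toDual ℝ _).symm f with ha
  have hfa : ∀ y, f y = ⟪a, y⟫ := fun y => (InnerProductSpace.toDual_symm_apply).symm
  have hane : a ≠ 0 := by
    intro h0
    have h1 : f (v' 0) < s := hfs _ (subset_convexHull ℝ _ (Set.mem_range_self 0))
    rw [hfa (v' 0), h0, inner_zero_left] at h1
    rw [hfa x, h0, inner_zero_left] at hsx
    linarith
  set y : EuclideanSpace ℝ (Fin n) := x + δ • ‖a‖⁻¹ • a with hy
  have hdist : dist y x = δ := by
    rw [hy, dist_eq_norm, add_sub_cancel_left, norm_smul, norm_smul, norm_inv, norm_norm,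
      Real.norm_eq_abs, abs_of_nonneg hδ0, inv_mul_cancel₀ (norm_ne_zero_iff.mpr hane), mul_one]
  have hyT := hball y hdist.le
  have hhalf : convexHull ℝ (Set.range v) ⊆ {z | f z ≤ s + ‖a‖ * δ} := by
    apply convexHull_min
    · rintro - ⟨i, rfl⟩
      have h1 : f (v' i) < s := hfs _ (subset_convexHull ℝ _ (Set.mem_range_self i))
      have h2 : f (v i) - f (v' i) = ⟪a, v i - v' i⟫ := by
        rw [hfa, hfa, inner_sub_right]
      have h3 : ⟪a, v i - v' i⟫ ≤ ‖a‖ * ‖v i - v' i‖ := real_inner_le_norm _ _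
      have h4 : ‖a‖ * ‖v i - v' i‖ ≤ ‖a‖ * δ :=
        mul_le_mul_of_nonneg_left (hδ i) (norm_nonneg a)
      simp only [Set.mem_setOf_eq]
      linarith
    · exact convex_halfSpace_le (f.toLinearMap.isLinear) _
  have hyf : f y ≤ s + ‖a‖ * δ := hhalf hyT
  have hfy : f y = f x + δ * ‖a‖ := by
    rw [hfa, hfa, hy, inner_add_right, inner_smul_right, inner_smul_right,
      real_inner_self_eq_norm_mul_norm]
    field_simp
  linarith
theorem stmt19 (n : ℕ) (μ δ : ℝ) (hμ : 0 < μ) (hδ0 : 0 ≤ δ) (hδμ : δ ≤ μ)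
    (v v' : Fin (n + 1) → EuclideanSpace ℝ (Fin n))
    (hv : ∀ i j, ‖v i - v j‖ < μ) (hv' : ∀ i j, ‖v' i - v' j‖ < μ)
    (hind : AffineIndependent ℝ v) (hind' : AffineIndependent ℝ v')
    (hδ : ∀ i, ‖v i - v' i‖ ≤ δ) :
    (volume (symmDiff (convexHull ℝ (Set.range v')) (convexHull ℝ (Set.range v)))).toReal ≤
      3 ^ n * (n + 1) * μ ^ (n - 1) * δ := by
  have hRHS0 : (0:ℝ) ≤ 3 ^ n * (n + 1) * μ ^ (n - 1) * δ := by positivity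
  rcases Nat.eq_zero_or_pos n with hn | hn
  · subst hn
    have hrange : Set.range v' = Set.range v := by
      ext x
      constructor
      · rintro ⟨i, rfl⟩; exact ⟨0, Subsingleton.elim _ _⟩
      · rintro ⟨i, rfl⟩; exact ⟨0, Subsingleton.elim _ _⟩
    rw [hrange, symmDiff_self]
    simpa using hδ0
  -- main case
  have htop : affineSpan ℝ (Set.range v) = ⊤ := by
    rw [hind.affineSpan_eq_top_iff_card_eq_finrank_add_one]
    simp [finrank_euclideanSpace_fin]
  have htop' : affineSpan ℝ (Set.range v') = ⊤ := by
    rw [hind'.affineSpan_eq_top_iff_card_eq_finrank_add_one]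
    simp [finrank_euclideanSpace_fin]
  set b : AffineBasis (Fin (n+1)) ℝ (EuclideanSpace ℝ (Fin n)) := ⟨v, hind, htop⟩ with hb
  set b' : AffineBasis (Fin (n+1)) ℝ (EuclideanSpace ℝ (Fin n)) := ⟨v', hind', htop'⟩ with hb'
  have hchar : convexHull ℝ (Set.range v) = {x | ∀ i, 0 ≤ b.coord i x} :=
    b.convexHull_eq_nonneg_coord
  have hchar' : convexHull ℝ (Set.range v') = {x | ∀ i, 0 ≤ b'.coord i x} :=
    b'.convexHull_eq_nonneg_coord
  set N : Fin (n+1) → Set (EuclideanSpace ℝ (Fin n)) := fun i =>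
    {x | ∃ z ∈ convexHull ℝ (Set.range (v ∘ i.succAbove)), dist x z ≤ δ} with hN
  have hcover : symmDiff (convexHull ℝ (Set.range v')) (convexHull ℝ (Set.range v))
      ⊆ ⋃ i, N i := by
    intro x hx
    rw [Set.mem_symmDiff] at hx
    rcases hx with ⟨hx', hxn⟩ | ⟨hxT, hxn'⟩
    · -- x ∈ T', x ∉ T
      set c : Fin (n+1) → ℝ := fun j => b'.coord j x with hc
      have hc0 : ∀ j, 0 ≤ c j := by
        have : x ∈ {y | ∀ i, 0 ≤ b'.coord i y} := by rw [← hchar']; exact hx'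
        exact this
      have hcsum : ∑ j, c j = 1 := b'.sum_coord_apply_eq_one x
      set y := Finset.univ.affineCombination ℝ v c with hydef
      have hyT : y ∈ convexHull ℝ (Set.range v) :=
        affineCombination_mem_convexHull (fun j _ => hc0 j) hcsum
      have hxy : dist x y ≤ δ := by
        have hx_rep : x = Finset.univ.affineCombination ℝ v' c :=
          (b'.affineCombination_coord_eq_self x).symm
        rw [dist_eq_norm, hx_rep, hydef,
          Finset.univ.affineCombination_eq_linear_combination v' c hcsum,
          Finset.univ.affineCombination_eq_linear_combination v c hcsum,
          ← Finset.sum_sub_distrib]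
        have hterm : ∀ j ∈ Finset.univ, c j • v' j - c j • v j = c j • (v' j - v j) := by
          intro j _; rw [smul_sub]
        rw [Finset.sum_congr rfl hterm]
        calc ‖∑ j, c j • (v' j - v j)‖ ≤ ∑ j, ‖c j • (v' j - v j)‖ :=
              norm_sum_le _ _
          _ = ∑ j, c j * ‖v' j - v j‖ := by
              apply Finset.sum_congr rfl
              intro j _
              rw [norm_smul, Real.norm_eq_abs, abs_of_nonneg (hc0 j)]
          _ ≤ ∑ j, c j * δ := by
              apply Finset.sum_le_sum
              intro j _
              apply mul_le_mul_of_nonneg_left _ (hc0 j)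
              rw [norm_sub_rev]; exact hδ j
          _ = δ := by rw [← Finset.sum_mul, hcsum, one_mul]
      have hyc : ∀ i, 0 ≤ b.coord i y := by
        have : y ∈ {z | ∀ i, 0 ≤ b.coord i z} := by rw [← hchar]; exact hyT
        exact this
      have hxc : ¬ ∀ i, 0 ≤ b.coord i x := by
        intro h
        exact hxn (by rw [hchar]; exact h)
      obtain ⟨i, z, hz0, hzi, hpz, hqz⟩ := crossing b y x hyc hxc
      refine Set.mem_iUnion.mpr ⟨i, z, mem_facet b z hz0 i hzi, ?_⟩
      calc dist x z ≤ dist y x := hqz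
        _ = dist x y := dist_comm _ _
        _ ≤ δ := hxy
    · -- x ∈ T, x ∉ T'
      by_cases hball : ∀ y, dist y x ≤ δ → y ∈ convexHull ℝ (Set.range v)
      · exact absurd (mem_of_ball_subset δ hδ0 v v' hδ x hball) hxn'
      · push_neg at hball
        obtain ⟨y, hyd, hyn⟩ := hball
        have hxc : ∀ i, 0 ≤ b.coord i x := by
          have : x ∈ {z | ∀ i, 0 ≤ b.coord i z} := by rw [← hchar]; exact hxT
          exact this
        have hyc : ¬ ∀ i, 0 ≤ b.coord i y := by
          intro h
          exact hyn (by rw [hchar]; exact h)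
        obtain ⟨i, z, hz0, hzi, hpz, hqz⟩ := crossing b x y hxc hyc
        refine Set.mem_iUnion.mpr ⟨i, z, mem_facet b z hz0 i hzi, ?_⟩
        calc dist x z ≤ dist x y := hpz
          _ = dist y x := dist_comm _ _
          _ ≤ δ := hyd
  set C : ℝ := (μ + 2*δ)^(n-1) * (2*δ) with hC
  have hC0 : 0 ≤ C := by positivity
  have hbound : volume (symmDiff (convexHull ℝ (Set.range v')) (convexHull ℝ (Set.range v)))
      ≤ ENNReal.ofReal ((n+1 : ℕ) * C) := by
    calc volume (symmDiff (convexHull ℝ (Set.range v')) (convexHull ℝ (Set.range v)))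
        ≤ volume (⋃ i, N i) := measure_mono hcover
      _ ≤ ∑ i : Fin (n+1), volume (N i) := measure_iUnion_fintype_le _ _
      _ ≤ ∑ _i : Fin (n+1), ENNReal.ofReal C := by
          apply Finset.sum_le_sum
          intro i _
          exact slab_vol n hn μ δ hδ0 (v ∘ i.succAbove) (fun j k => (hv _ _).le)
      _ = (n+1 : ℕ) * ENNReal.ofReal C := by
          rw [Finset.sum_const, Finset.card_univ, Fintype.card_fin, nsmul_eq_mul]
      _ = ENNReal.ofReal ((n+1 : ℕ) * C) := by
          rw [← ENNReal.ofReal_natCast, ← ENNReal.ofReal_mul (by positivity)]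
  have htoReal : (volume (symmDiff (convexHull ℝ (Set.range v'))
      (convexHull ℝ (Set.range v)))).toReal ≤ (n+1 : ℕ) * C :=
    ENNReal.toReal_le_of_le_ofReal (by positivity) hbound
  refine le_trans htoReal ?_
  -- the real arithmetic
  have h1 : (μ + 2*δ)^(n-1) ≤ 3^(n-1) * μ^(n-1) := by
    rw [← mul_pow]
    exact pow_le_pow_left₀ (by linarith) (by linarith) _
  have h3 : (3:ℝ)^n = 3 * 3^(n-1) := by
    rw [← pow_succ']
    congr 1
    omega
  have h4 : (0:ℝ) ≤ 3^(n-1) * ((n:ℝ)+1) * μ^(n-1) * δ := by positivity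
  push_cast
  calc ((n:ℝ)+1) * ((μ + 2*δ)^(n-1) * (2*δ))
      ≤ ((n:ℝ)+1) * ((3^(n-1) * μ^(n-1)) * (2*δ)) := by
        apply mul_le_mul_of_nonneg_left _ (by positivity)
        apply mul_le_mul_of_nonneg_right h1 (by positivity)
    _ = 2 * (3^(n-1) * ((n:ℝ)+1) * μ^(n-1) * δ) := by ring
    _ ≤ 3 * (3^(n-1) * ((n:ℝ)+1) * μ^(n-1) * δ) := by nlinarith [h4]
    _ = 3^n * ((n:ℝ)+1) * μ^(n-1) * δ := by rw [h3]; ring
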